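/- Let G be a finite graph and f : V(G) → ℕ. If e(G) > Σ_{v ∈ V(G)} f(v), then G has an induced subgraph H such that d_H(v) > f(v) for every v ∈ V(H). -/

import Mathlib

namespace Paper

variable {V : Type*} {E : Type*} {W : Type*}

/-- The degree of a vertex. -/
noncomputable def deg (G : SimpleGraph V) (v : V) : ℕ := (G.neighborSet v).ncard

/-- The number of edges of a graph. -/
noncomputable def edgeCount (G : SimpleGraph V) : ℕ := G.edgeSet.ncard

/-- The minimum degree δ(G). -/
noncomputable def minDeg (G : SimpleGraph V) : ℕ := sInf (Set.range (deg G))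

/-- The clique number ω(G). -/
noncomputable def cliqueNum (G : SimpleGraph V) : ℕ :=
  sSup {n | ∃ s : Finset V, G.IsNClique n s}

/-- `G` is (a copy of) the complete graph `K_k`. -/
def IsCompleteK (k : ℕ) (G : SimpleGraph V) : Prop :=
  Nat.card V = k ∧ ∀ u v : V, u ≠ v → G.Adj u v

/-- `D` is an orientation of the simple graph `G`: every edge gets exactly one direction. -/
def IsOrientation (G : SimpleGraph V) (D : V → V → Prop) : Prop :=
  (∀ u v, D u v → G.Adj u v) ∧ ∀ u v, G.Adj u v → (D u v ↔ ¬ D v u)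

/-- Out-degree of `v` in the digraph `D`. -/
noncomputable def outDeg (D : V → V → Prop) (v : V) : ℕ := {u | D v u}.ncard

/-- `A` is a spanning Eulerian subdigraph of `D`: a set of directed edges of `D` in which
every vertex has equal in-degree and out-degree. -/
def IsEulerianSub (D : V → V → Prop) (A : Set (V × V)) : Prop :=
  (∀ p ∈ A, D p.1 p.2) ∧
    ∀ v : V, {p | p ∈ A ∧ p.2 = v}.ncard = {p | p ∈ A ∧ p.1 = v}.ncard

/-- `EE D`: the number of even spanning Eulerian subgraphs of `D`. -/
noncomputable def EE (D : V → V → Prop) : ℕ :=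
  {A : Set (V × V) | IsEulerianSub D A ∧ Even A.ncard}.ncard

/-- `EO D`: the number of odd spanning Eulerian subgraphs of `D`. -/
noncomputable def EO (D : V → V → Prop) : ℕ :=
  {A : Set (V × V) | IsEulerianSub D A ∧ ¬ Even A.ncard}.ncard

/-- `G` is `f`-Alon–Tarsi: it has an orientation `D` with `f v ≥ d⁺(v) + 1` for every `v`
and `EE D ≠ EO D`. -/
def IsfAT (G : SimpleGraph V) (f : V → ℕ) : Prop :=
  ∃ D : V → V → Prop, IsOrientation G D ∧ (∀ v, outDeg D v + 1 ≤ f v) ∧ EE D ≠ EO D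

/-- `G` is AT-reducible to the nonempty induced subgraph on `S`, which is `f_H`-AT for
`f_H v = δ(G) + d_H v - d_G v`. -/
def ATReducibleTo (G : SimpleGraph V) (S : Set V) : Prop :=
  S.Nonempty ∧ IsfAT (G.induce S) (fun v => minDeg G + deg (G.induce S) v - deg G ↑v)

/-- `G` is AT-irreducible: it is AT-reducible to no nonempty induced subgraph. -/
def ATIrreducible (G : SimpleGraph V) : Prop := ∀ S : Set V, ¬ ATReducibleTo G S

/-- Gallai's function `g_k(n, c)`. -/
noncomputable def gfun (k n : ℕ) (c : ℝ) : ℝ :=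
  ((k : ℝ) - 1 + ((k : ℝ) - 3) / (((k : ℝ) - c) * ((k : ℝ) - 1) + (k : ℝ) - 3)) * n

/-- The constant `α_k = 1/2 - 1/((k-1)(k-2))`. -/
noncomputable def alphaK (k : ℕ) : ℝ := 1 / 2 - 1 / (((k : ℝ) - 1) * ((k : ℝ) - 2))

/-- Edges of `G` with both endpoints inside `S`. -/
private def ES {V : Type*} (G : SimpleGraph V) (S : Set V) : Set (Sym2 V) :=
  {e ∈ G.edgeSet | ∀ x ∈ e, x ∈ S}

private lemma edgeCount_induce_eq' {V : Type*} (G : SimpleGraph V) (S : Set V) :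
    edgeCount (G.induce S) = (ES G S).ncard := by
  have hinj : Function.Injective (Sym2.map (Subtype.val : S → V)) :=
    Sym2.map.injective Subtype.val_injective
  rw [edgeCount, ← Set.ncard_image_of_injective _ hinj]
  congr 1
  ext e
  constructor
  · rintro ⟨e', he', rfl⟩
    induction e' using Sym2.ind with
    | _ a b =>
      refine ⟨by simpa using he', ?_⟩
      intro x hx
      rw [Sym2.map_pair_eq, Sym2.mem_iff] at hx
      rcases hx with rfl | rfl
      · exact a.2
      · exact b.2
  · rintro ⟨he, hmem⟩
    induction e using Sym2.ind with
    | _ a b =>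
      have ha : a ∈ S := hmem a (Sym2.mem_mk_left a b)
      have hb : b ∈ S := hmem b (Sym2.mem_mk_right a b)
      exact ⟨s(⟨a, ha⟩, ⟨b, hb⟩), by simpa using he, by simp⟩

private lemma deg_induce_eq' {V : Type*} (G : SimpleGraph V) (S : Set V) (v : V) (hv : v ∈ S) :
    deg (G.induce S) ⟨v, hv⟩ = {e ∈ ES G S | v ∈ e}.ncard := by
  have hinj : Function.Injective (fun u : S => s(v, (u : V))) := by
    intro a b hab
    simp only [Sym2.congr_right] at hab
    exact Subtype.val_injective hab
  rw [deg, ← Set.ncard_image_of_injective _ hinj]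
  congr 1
  ext e
  constructor
  · rintro ⟨u, hu, rfl⟩
    have hadj : G.Adj v (u : V) := by simpa [SimpleGraph.neighborSet] using hu
    refine ⟨⟨hadj, ?_⟩, by simp⟩
    intro x hx
    rw [Sym2.mem_iff] at hx
    rcases hx with rfl | rfl
    exacts [hv, u.2]
  · rintro ⟨⟨he, hmem⟩, hve⟩
    obtain ⟨u, rfl⟩ := Sym2.mem_iff_exists.mp hve
    have hu : u ∈ S := hmem u (Sym2.mem_mk_right v u)
    have hadj : G.Adj v u := he
    exact ⟨⟨u, hu⟩, by simpa [SimpleGraph.neighborSet] using hadj, rfl⟩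

private lemma ES_split' {V : Type*} [Fintype V] (G : SimpleGraph V) (S : Set V) (v : V) :
    (ES G S).ncard = (ES G (S \ {v})).ncard + {e ∈ ES G S | v ∈ e}.ncard := by
  have hU : ES G S = ES G (S \ {v}) ∪ {e ∈ ES G S | v ∈ e} := by
    ext e
    constructor
    · rintro ⟨he, hmem⟩
      by_cases hve : v ∈ e
      · exact Or.inr ⟨⟨he, hmem⟩, hve⟩
      · exact Or.inl ⟨he, fun x hx => ⟨hmem x hx, fun hxv => hve (hxv ▸ hx)⟩⟩
    · rintro (⟨he, hmem⟩ | ⟨⟨he, hmem⟩, _⟩)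
      · exact ⟨he, fun x hx => (hmem x hx).1⟩
      · exact ⟨he, hmem⟩
  have hd : Disjoint (ES G (S \ {v})) {e ∈ ES G S | v ∈ e} := by
    rw [Set.disjoint_left]
    rintro e ⟨_, hmem⟩ ⟨_, hve⟩
    exact (hmem v hve).2 rfl
  conv_lhs => rw [hU]
  rw [Set.ncard_union_eq hd (Set.toFinite _) (Set.toFinite _)]

private lemma key_18 {V : Type*} [Fintype V] (G : SimpleGraph V) (f : V → ℕ) :
    ∀ n (S : Set V), S.ncard ≤ n → (∑ x ∈ S.toFinite.toFinset, f x) < (ES G S).ncard →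
      ∃ T : Set V, T.Nonempty ∧ ∀ v : ↥T, f ↑v < deg (G.induce T) v := by
  classical
  intro n
  induction n with
  | zero =>
    intro S hcard hlt
    interval_cases hS : S.ncard
    have : S = ∅ := (Set.ncard_eq_zero S.toFinite).mp hS
    subst this
    have : ES G (∅ : Set V) = ∅ := by
      ext e
      simp only [ES, Set.mem_setOf_eq, Set.mem_empty_iff_false, iff_false, not_and]
      intro _ hmem
      induction e using Sym2.ind with
      | _ a b => exact absurd (hmem a (Sym2.mem_mk_left a b)) (by simp)
    rw [this] at hlt
    simp at hlt
  | succ n ih =>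
    intro S hcard hlt
    by_cases hall : ∀ v : ↥S, f ↑v < deg (G.induce S) v
    · refine ⟨S, ?_, hall⟩
      have hne : (ES G S).Nonempty := by
        rw [Set.nonempty_iff_ne_empty]
        intro hemp
        rw [hemp] at hlt; simp at hlt
      obtain ⟨e, he, hmem⟩ := hne
      induction e using Sym2.ind with
      | _ a b => exact ⟨a, hmem a (Sym2.mem_mk_left a b)⟩
    · push_neg at hall
      obtain ⟨v, hdeg⟩ := hall
      have hv : (v : V) ∈ S := v.2
      have hsplit := ES_split' G S (v : V)
      have hdegeq := deg_induce_eq' G S (v : V) hv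
      have hdeg' : {e ∈ ES G S | (v : V) ∈ e}.ncard ≤ f ↑v := by
        rw [← hdegeq]
        simpa using hdeg
      have hsum : ∑ x ∈ S.toFinite.toFinset, f x
          = f ↑v + ∑ x ∈ (S \ {(v : V)}).toFinite.toFinset, f x := by
        have hfs : (S \ {(v : V)}).toFinite.toFinset = S.toFinite.toFinset.erase (v : V) := by
          ext x
          simp only [Set.Finite.mem_toFinset, Finset.mem_erase, Set.mem_diff,
            Set.mem_singleton_iff]; tauto
        rw [hfs, Finset.add_sum_erase _ f (by rw [Set.Finite.mem_toFinset]; exact hv)]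
      apply ih (S \ {(v : V)})
      · have h1 : (S \ {(v : V)}).ncard = S.ncard - 1 :=
          Set.ncard_diff_singleton_of_mem hv
        omega
      · omega

theorem statement_18 {V : Type*} [Fintype V] (G : SimpleGraph V) (f : V → ℕ)
    (h : ∑ v : V, f v < edgeCount G) :
    ∃ S : Set V, S.Nonempty ∧ ∀ v : ↥S, f ↑v < deg (G.induce S) v := by
  apply key_18 G f (Set.univ : Set V).ncard Set.univ le_rfl
  have h1 : ES G (Set.univ : Set V) = G.edgeSet := by
    ext e; simp [ES]
  have h2 : (Set.univ : Set V).toFinite.toFinset = Finset.univ := by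
    ext x; simp
  rw [h1, h2]
  exact h

end Paper
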